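/- Let A be a unital C*-algebra and φ : A → ℂ continuous with φ(1) = 1 and φ(x)φ(y) ∈ σ(xy) for all x,y. If x is self-adjoint and φ(x) = 0, then φ(x²) = 0. -/

import Mathlib

set_option maxHeartbeats 1000000

variable {A : Type*} [NormedRing A] [StarRing A] [CStarRing A] [NormedAlgebra ℂ A] [CompleteSpace A] [StarModule ℂ A]

theorem stmt_15 (φ : A → ℂ) (hc : Continuous φ)
    (hone : φ 1 = 1)
    (hmul : ∀ x y : A, φ x * φ y ∈ spectrum ℂ (x * y))
    (x : A) (hx : IsSelfAdjoint x) (hφx : φ x = 0) :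
    φ (x ^ 2) = 0 := by
  rcases subsingleton_or_nontrivial A with hA | hA
  · have h := hmul 1 1
    rw [hone, one_mul, mul_one] at h
    exact absurd h (spectrum.notMem_iff.mpr (isUnit_of_subsingleton _))
  set z : ℕ → ℂ := fun n => ((((n : ℝ) + 1)⁻¹ : ℝ) : ℂ) * Complex.I with hzdef
  set u : ℕ → A := fun n => x - (z n) • 1 with hudef
  have hzim : ∀ n : ℕ, (z n).im = ((n : ℝ) + 1)⁻¹ := by
    intro n
    simp only [hzdef, Complex.mul_im, Complex.I_im, Complex.I_re, Complex.ofReal_re,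
      Complex.ofReal_im, mul_one, mul_zero, zero_mul, add_zero]
  have hznorm : ∀ n : ℕ, ‖z n‖ = ((n : ℝ) + 1)⁻¹ := by
    intro n
    rw [hzdef]
    rw [norm_mul, Complex.norm_I, mul_one, Complex.norm_real,
      Real.norm_eq_abs, abs_of_nonneg (by positivity)]
  have hunit : ∀ n, IsUnit (u n) := by
    intro n
    have hz : z n ∉ spectrum ℂ x := by
      intro h
      letI : CStarAlgebra A :=
        { ‹NormedRing A›, ‹StarRing A›, ‹CompleteSpace A›, ‹CStarRing A›,
          ‹NormedAlgebra ℂ A›, ‹StarModule ℂ A› with }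
      have := congrArg Complex.im (hx.mem_spectrum_eq_re h)
      rw [hzim n, Complex.ofReal_im] at this
      exact absurd this (by positivity)
    have h1 := spectrum.notMem_iff.mp hz
    have h2 : algebraMap ℂ A (z n) - x = -(u n) := by
      rw [Algebra.algebraMap_eq_smul_one]
      exact (neg_sub x (z n • 1)).symm
    rw [h2] at h1
    exact (IsUnit.neg_iff _).mp h1
  -- key inequality
  have key : ∀ n : ℕ, ‖φ (u n ^ 2)‖ ≤ (‖x‖ + 1) * ‖φ (u n)‖ := by
    intro n
    set v : Aˣ := (hunit n).unit with hvdef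
    have hv : (v : A) = u n := (hunit n).unit_spec
    have h1 : φ (u n) * φ (↑v⁻¹) = 1 := by
      have := hmul (u n) (↑v⁻¹)
      rw [← hv, Units.mul_inv, spectrum.one_eq] at this
      exact this
    have h2 : φ (u n ^ 2) * φ (↑v⁻¹) ∈ spectrum ℂ (u n) := by
      have h3 : u n ^ 2 * (↑v⁻¹ : A) = u n := by
        rw [← hv, sq, mul_assoc, Units.mul_inv, mul_one]
      have := hmul (u n ^ 2) (↑v⁻¹)
      rwa [h3] at this
    have hub : ‖u n‖ ≤ ‖x‖ + 1 := by
      calc ‖u n‖ ≤ ‖x‖ + ‖(z n) • (1 : A)‖ := norm_sub_le _ _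
        _ ≤ ‖x‖ + 1 := by
            rw [norm_smul, norm_one, mul_one, hznorm n]
            have : ((n : ℝ) + 1)⁻¹ ≤ 1 := by
              rw [inv_le_one_iff₀]; right; linarith [Nat.cast_nonneg (α := ℝ) n]
            linarith
    have hs : ‖φ (u n ^ 2) * φ (↑v⁻¹)‖ ≤ ‖x‖ + 1 :=
      le_trans (spectrum.norm_le_norm_of_mem h2) hub
    have hrw : φ (u n ^ 2) = (φ (u n ^ 2) * φ (↑v⁻¹)) * φ (u n) := by
      rw [mul_assoc, mul_comm (φ (↑v⁻¹)), h1, mul_one]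
    have heq : ‖φ (u n ^ 2)‖ = ‖φ (u n ^ 2) * φ (↑v⁻¹)‖ * ‖φ (u n)‖ := by
      rw [← norm_mul, ← hrw]
    rw [heq]
    exact mul_le_mul_of_nonneg_right hs (norm_nonneg _)
  -- limits
  have hztend : Filter.Tendsto z Filter.atTop (nhds 0) := by
    rw [tendsto_zero_iff_norm_tendsto_zero]
    simp only [hznorm]
    exact tendsto_one_div_add_atTop_nhds_zero_nat.congr (by intro n; rw [one_div])
  have hutend : Filter.Tendsto u Filter.atTop (nhds x) := by
    have : Filter.Tendsto (fun n => (z n) • (1 : A)) Filter.atTop (nhds 0) := by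
      simpa using hztend.smul_const (1 : A)
    simpa using (tendsto_const_nhds (x := x)).sub this
  have h2tend : Filter.Tendsto (fun n => φ (u n ^ 2)) Filter.atTop (nhds (φ (x ^ 2))) :=
    (hc.tendsto _).comp (hutend.pow 2)
  have h1tend : Filter.Tendsto (fun n => ‖φ (u n)‖) Filter.atTop (nhds 0) := by
    have : Filter.Tendsto (fun n => φ (u n)) Filter.atTop (nhds 0) := by
      have h := (hc.tendsto x).comp hutend
      rw [hφx] at h
      exact h
    exact tendsto_zero_iff_norm_tendsto_zero.mp this
  have hzero : Filter.Tendsto (fun n => φ (u n ^ 2)) Filter.atTop (nhds 0) := by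
    apply squeeze_zero_norm key
    simpa using h1tend.const_mul (‖x‖ + 1)
  exact tendsto_nhds_unique h2tend hzero
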